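/- arXiv:2204.08031 — 2 statements merged into one kernel-verified Lean document; each statement's English description precedes it below -/
import Mathlib

section
/- Let Y₃ be a random variable and let Y₁,Ỹ₁ be conditionally i.i.d. given X₁, Y₂,Ỹ₂ conditionally i.i.d. given X₂, with Y₃, (Y₁,Ỹ₁), (Y₂,Ỹ₂) conditionally independent given (X₁,X₂,X₃). Then E[Cov[𝟙(Y₃ ≤ min(Y₁,Ỹ₁)), 𝟙(Y₃ ≤ min(Y₂,Ỹ₂)) | X₁,X₂,X₃]] = E[Var[h(Y₃) | X₃]], where h(t) = E[P(Y ≥ t | X)²] and G_X(t)=P(Y≥t|X). -/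
open MeasureTheory ProbabilityTheory

lemma my_int_prod {E : Type*} [MeasurableSpace E] (ρ : Measure E) [IsProbabilityMeasure ρ]
    (μ : Measure ℝ) [IsProbabilityMeasure μ] (g : E × ℝ → ℝ)
    (hm : Measurable g) (hb : ∀ p, ‖g p‖ ≤ 1) : Integrable g (ρ.prod μ) :=
  ⟨hm.aestronglyMeasurable, HasFiniteIntegral.of_bounded (C := 1) (ae_of_all _ hb)⟩

lemma my_swap {E : Type*} [MeasurableSpace E] (ρ : Measure E) [IsProbabilityMeasure ρ]
    (μ : Measure ℝ) [IsProbabilityMeasure μ] (g : E × ℝ → ℝ)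
    (hm : Measurable g) (hb : ∀ p, ‖g p‖ ≤ 1) :
    ∫ x, ∫ t, g (x, t) ∂μ ∂ρ = ∫ t, ∫ x, g (x, t) ∂ρ ∂μ :=
  integral_integral_swap (my_int_prod ρ μ g hm hb)

/-- With `ρ` the common law of the i.i.d. `X₁,X₂,X₃`, `κ x` the conditional law of `Y`
given `X = x`, `G x t = P(Y ≥ t | X = x)` and `h t = E[G_X(t)²]`:
`E[Cov[𝟙(Y₃ ≤ Y₁∧Ỹ₁), 𝟙(Y₃ ≤ Y₂∧Ỹ₂) | X₁,X₂,X₃]] = E[Var[h(Y₃)|X₃]]`,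
where conditionally on the `X`'s the blocks are independent with `Y_i,Ỹ_i ~ κ X_i`
i.i.d. (so the conditional covariance has the explicit integral form below). -/
theorem cov_indicator_eq_var_h
    {E : Type*} [MeasurableSpace E]
    (ρ : Measure E) [IsProbabilityMeasure ρ]
    (κ : Kernel E ℝ) [IsMarkovKernel κ]
    (G : E → ℝ → ℝ) (hG : ∀ x t, G x t = ((κ x) (Set.Ici t)).toReal)
    (h : ℝ → ℝ) (hh : ∀ t, h t = ∫ x, (G x t) ^ 2 ∂ρ) :
    (∫ x₃, ∫ x₂, ∫ x₁,
        ((∫ t, (G x₁ t) ^ 2 * (G x₂ t) ^ 2 ∂(κ x₃))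
          - (∫ t, (G x₁ t) ^ 2 ∂(κ x₃)) * (∫ t, (G x₂ t) ^ 2 ∂(κ x₃))) ∂ρ ∂ρ ∂ρ)
      = ∫ x, ((∫ t, (h t) ^ 2 ∂(κ x)) - (∫ t, h t ∂(κ x)) ^ 2) ∂ρ := by
  -- measurability of G in both variables
  have hset : MeasurableSet {q : (E × ℝ) × ℝ | q.1.2 ≤ q.2} :=
    measurableSet_le measurable_fst.snd measurable_snd
  have hGmeas : Measurable fun p : E × ℝ => G p.1 p.2 := by
    set κ' : Kernel (E × ℝ) ℝ := κ.comap (Prod.fst : E × ℝ → E) measurable_fst with hκ'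
    have key : Measurable fun p : E × ℝ =>
        κ' p (Prod.mk p ⁻¹' {q : (E × ℝ) × ℝ | q.1.2 ≤ q.2}) :=
      Kernel.measurable_kernel_prodMk_left hset
    have heq : (fun p : E × ℝ => G p.1 p.2) = fun p : E × ℝ =>
        (κ' p (Prod.mk p ⁻¹' {q : (E × ℝ) × ℝ | q.1.2 ≤ q.2})).toReal := by
      funext p
      rw [hG, hκ', Kernel.comap_apply]
      rfl
    rw [heq]
    exact key.ennreal_toReal
  have hG0 : ∀ x t, 0 ≤ G x t := fun x t => by rw [hG]; positivity
  have hG1 : ∀ x t, G x t ≤ 1 := fun x t => by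
    rw [hG]
    simpa using ENNReal.toReal_mono ENNReal.one_ne_top prob_le_one
  have hf01 : ∀ x t, (G x t) ^ 2 ∈ Set.Icc (0:ℝ) 1 := fun x t =>
    ⟨by positivity, pow_le_one₀ (hG0 x t) (hG1 x t)⟩
  have hfmeas : Measurable fun p : E × ℝ => (G p.1 p.2) ^ 2 := hGmeas.pow_const 2
  have hhmeas : Measurable h := by
    have hm : Measurable fun t : ℝ => ∫ x, (G x t) ^ 2 ∂ρ :=
      ((hfmeas.comp measurable_swap).stronglyMeasurable.integral_prod_right'
        (ν := ρ)).measurable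
    have : h = fun t => ∫ x, (G x t) ^ 2 ∂ρ := funext hh
    rw [this]; exact hm
  have hh01 : ∀ t, h t ∈ Set.Icc (0:ℝ) 1 := fun t => by
    rw [hh]
    refine ⟨integral_nonneg fun x => (hf01 x t).1, ?_⟩
    calc ∫ x, (G x t) ^ 2 ∂ρ ≤ ∫ (_ : E), (1:ℝ) ∂ρ :=
          integral_mono_of_nonneg (ae_of_all _ fun x => (hf01 x t).1)
            (integrable_const 1) (ae_of_all _ fun x => (hf01 x t).2)
      _ = 1 := by simp
  refine integral_congr_ae (ae_of_all _ fun x₃ => ?_)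
  set μ := κ x₃ with hμ
  -- bounds for mixed integrands
  have hbmul : ∀ x₂ (p : E × ℝ), ‖(G p.1 p.2) ^ 2 * (G x₂ p.2) ^ 2‖ ≤ 1 := fun x₂ p => by
    rw [Real.norm_eq_abs, abs_of_nonneg (by positivity)]
    exact mul_le_one₀ (hf01 _ _).2 (hf01 _ _).1 (hf01 _ _).2
  have hmmul : ∀ x₂, Measurable fun p : E × ℝ => (G p.1 p.2) ^ 2 * (G x₂ p.2) ^ 2 := fun x₂ =>
    hfmeas.mul (hfmeas.comp (measurable_const.prodMk measurable_snd))
  have hbf : ∀ p : E × ℝ, ‖(G p.1 p.2) ^ 2‖ ≤ 1 := fun p => by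
    rw [Real.norm_eq_abs, abs_of_nonneg (hf01 _ _).1]; exact (hf01 _ _).2
  -- base swap: ∫x ∫t f = ∫t h
  have hbase : (∫ x₁, ∫ t, (G x₁ t) ^ 2 ∂μ ∂ρ) = ∫ t, h t ∂μ := by
    rw [my_swap ρ μ (fun p => (G p.1 p.2) ^ 2) hfmeas hbf]
    exact integral_congr_ae (ae_of_all _ fun t => (hh t).symm)
  -- step 1: inner x₁ integral
  have hint1 : ∀ x₂, Integrable (fun x₁ => ∫ t, (G x₁ t) ^ 2 * (G x₂ t) ^ 2 ∂μ) ρ := fun x₂ =>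
    (my_int_prod ρ μ _ (hmmul x₂) (hbmul x₂)).integral_prod_left
  have hintf : Integrable (fun x₁ => ∫ t, (G x₁ t) ^ 2 ∂μ) ρ :=
    (my_int_prod ρ μ _ hfmeas hbf).integral_prod_left
  have step1 : ∀ x₂, (∫ x₁, ((∫ t, (G x₁ t) ^ 2 * (G x₂ t) ^ 2 ∂μ)
        - (∫ t, (G x₁ t) ^ 2 ∂μ) * (∫ t, (G x₂ t) ^ 2 ∂μ)) ∂ρ)
      = (∫ t, h t * (G x₂ t) ^ 2 ∂μ) - (∫ t, h t ∂μ) * (∫ t, (G x₂ t) ^ 2 ∂μ) := by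
    intro x₂
    rw [integral_sub (hint1 x₂) (hintf.mul_const _), integral_mul_const, hbase]
    congr 1
    rw [my_swap ρ μ _ (hmmul x₂) (hbmul x₂)]
    refine integral_congr_ae (ae_of_all _ fun t => ?_)
    show (∫ x, (G x t) ^ 2 * (G x₂ t) ^ 2 ∂ρ) = h t * (G x₂ t) ^ 2
    rw [integral_mul_const, hh]
  simp_rw [← hμ, step1]
  -- step 2: outer x₂ integral
  have hmix : Measurable fun p : E × ℝ => h p.2 * (G p.1 p.2) ^ 2 :=
    (hhmeas.comp measurable_snd).mul hfmeas
  have hbmix : ∀ p : E × ℝ, ‖h p.2 * (G p.1 p.2) ^ 2‖ ≤ 1 := fun p => by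
    rw [Real.norm_eq_abs, abs_of_nonneg (mul_nonneg (hh01 _).1 (hf01 _ _).1)]
    exact mul_le_one₀ (hh01 _).2 (hf01 _ _).1 (hf01 _ _).2
  have hintmix : Integrable (fun x₂ => ∫ t, h t * (G x₂ t) ^ 2 ∂μ) ρ :=
    (my_int_prod ρ μ _ hmix hbmix).integral_prod_left
  rw [integral_sub hintmix (hintf.const_mul _)]
  congr 1
  · rw [my_swap ρ μ _ hmix hbmix]
    refine integral_congr_ae (ae_of_all _ fun t => ?_)
    show (∫ x, h t * (G x t) ^ 2 ∂ρ) = (h t) ^ 2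
    rw [integral_const_mul, hh, sq]
  · rw [integral_const_mul, hbase, sq]
end

section
/- If X and Y are independent and F_{X,Y} is continuous, then E[ξ_n] = −1/(n−1), where ξ_n is Azadkia–Chatterjee's coefficient ξ_n = (6/(n²−1)) Σ_{i=1}^n min{R_i, R_{N(i)}} − (2n+1)/(n−1). -/
open MeasureTheory ProbabilityTheory Filter
open scoped ENNReal Topology


lemma AC.diag_null (ν : Measure ℝ) [IsProbabilityMeasure ν] (hatom : ∀ t : ℝ, ν {t} = 0) :
    (ν.prod ν) {p : ℝ × ℝ | p.1 = p.2} = 0 := by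
  have hD : MeasurableSet {p : ℝ × ℝ | p.1 = p.2} :=
    measurableSet_eq_fun measurable_fst measurable_snd
  rw [Measure.prod_apply hD]
  have : ∀ a : ℝ, ν (Prod.mk a ⁻¹' {p : ℝ × ℝ | p.1 = p.2}) = 0 := by
    intro a
    have : Prod.mk a ⁻¹' {p : ℝ × ℝ | p.1 = p.2} = {a} := by
      ext b; simp [eq_comm]
    rw [this, hatom]
  rw [lintegral_congr this, lintegral_zero]

lemma AC.half (ν : Measure ℝ) [IsProbabilityMeasure ν] (hatom : ∀ t : ℝ, ν {t} = 0) :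
    (ν.prod ν) {p : ℝ × ℝ | p.1 ≤ p.2} = 1/2 := by
  set S : Set (ℝ × ℝ) := {p | p.1 ≤ p.2} with hSdef
  have hS : MeasurableSet S := measurableSet_le measurable_fst measurable_snd
  have hswap : (ν.prod ν) (Prod.swap ⁻¹' S) = (ν.prod ν) S :=
    (Measure.measurePreserving_swap (μ := ν) (ν := ν)).measure_preimage hS.nullMeasurableSet
  have hunion : S ∪ Prod.swap ⁻¹' S = Set.univ := by
    ext p; simp only [Set.mem_union, Set.mem_univ, iff_true, Set.mem_preimage, hSdef,
      Set.mem_setOf_eq, Prod.fst_swap, Prod.snd_swap]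
    exact le_total p.1 p.2
  have hinter : (ν.prod ν) (S ∩ Prod.swap ⁻¹' S) = 0 := by
    refine measure_mono_null ?_ (AC.diag_null ν hatom)
    rintro ⟨a, b⟩ ⟨h1, h2⟩
    exact le_antisymm h1 h2
  have key := measure_union_add_inter (μ := ν.prod ν) S (hS.preimage measurable_swap)
  rw [hunion, hinter, add_zero, hswap, measure_univ] at key
  have h2 : (2 : ℝ≥0∞) * (ν.prod ν) S = 1 := by rw [two_mul]; exact key.symm
  rw [ENNReal.eq_div_iff two_ne_zero ENNReal.ofNat_ne_top]
  exact h2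

section
variable (ν : Measure ℝ) [IsProbabilityMeasure ν]

lemma AC.eq12_null (hatom : ∀ t : ℝ, ν {t} = 0) : (ν.prod (ν.prod ν)) {p : ℝ × ℝ × ℝ | p.1 = p.2.1} = 0 := by
  have hD : MeasurableSet {p : ℝ × ℝ × ℝ | p.1 = p.2.1} :=
    measurableSet_eq_fun measurable_fst (measurable_fst.comp measurable_snd)
  rw [Measure.prod_apply hD]
  have h : ∀ a : ℝ, (ν.prod ν) (Prod.mk a ⁻¹' {p : ℝ × ℝ × ℝ | p.1 = p.2.1}) = 0 := by
    intro a
    have : Prod.mk a ⁻¹' {p : ℝ × ℝ × ℝ | p.1 = p.2.1} = ({a} : Set ℝ) ×ˢ (Set.univ : Set ℝ) := by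
      ext q
      simp only [Set.mem_preimage, Set.mem_setOf_eq, Set.mem_prod, Set.mem_singleton_iff,
        Set.mem_univ, and_true]
      exact eq_comm
    rw [this, Measure.prod_prod, hatom, zero_mul]
  rw [lintegral_congr h, lintegral_zero]

lemma AC.eq13_null (hatom : ∀ t : ℝ, ν {t} = 0) : (ν.prod (ν.prod ν)) {p : ℝ × ℝ × ℝ | p.1 = p.2.2} = 0 := by
  have hD : MeasurableSet {p : ℝ × ℝ × ℝ | p.1 = p.2.2} :=
    measurableSet_eq_fun measurable_fst (measurable_snd.comp measurable_snd)
  rw [Measure.prod_apply hD]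
  have h : ∀ a : ℝ, (ν.prod ν) (Prod.mk a ⁻¹' {p : ℝ × ℝ × ℝ | p.1 = p.2.2}) = 0 := by
    intro a
    have : Prod.mk a ⁻¹' {p : ℝ × ℝ × ℝ | p.1 = p.2.2} = (Set.univ : Set ℝ) ×ˢ ({a} : Set ℝ) := by
      ext q
      simp only [Set.mem_preimage, Set.mem_setOf_eq, Set.mem_prod, Set.mem_singleton_iff,
        Set.mem_univ, true_and]
      exact eq_comm
    rw [this, Measure.prod_prod, hatom, mul_zero]
  rw [lintegral_congr h, lintegral_zero]

lemma AC.eq23_null (hatom : ∀ t : ℝ, ν {t} = 0) : (ν.prod (ν.prod ν)) {p : ℝ × ℝ × ℝ | p.2.1 = p.2.2} = 0 := by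
  have hD : MeasurableSet {p : ℝ × ℝ × ℝ | p.2.1 = p.2.2} :=
    measurableSet_eq_fun (measurable_fst.comp measurable_snd) (measurable_snd.comp measurable_snd)
  rw [Measure.prod_apply hD]
  have h : ∀ a : ℝ, (ν.prod ν) (Prod.mk a ⁻¹' {p : ℝ × ℝ × ℝ | p.2.1 = p.2.2}) = 0 := by
    intro a
    have : Prod.mk a ⁻¹' {p : ℝ × ℝ × ℝ | p.2.1 = p.2.2} = {q : ℝ × ℝ | q.1 = q.2} := rfl
    rw [this, AC.diag_null ν hatom]
  rw [lintegral_congr h, lintegral_zero]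

lemma AC.third (hatom : ∀ t : ℝ, ν {t} = 0) :
    (ν.prod (ν.prod ν)) {p : ℝ × ℝ × ℝ | p.1 ≤ p.2.1 ∧ p.1 ≤ p.2.2} = 1/3 := by
  set ρ := ν.prod (ν.prod ν) with hρ
  have hPM12 : MeasurePreserving (fun p : ℝ × ℝ × ℝ => (p.2.1, (p.1, p.2.2))) ρ ρ := by
    have h1 := MeasureTheory.measurePreserving_prodAssoc ν ν ν
    have h2 : MeasurePreserving (Prod.map Prod.swap (id : ℝ → ℝ))
        ((ν.prod ν).prod ν) ((ν.prod ν).prod ν) :=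
      (Measure.measurePreserving_swap).prod (MeasurePreserving.id ν)
    have h3 := (h1.comp h2).comp h1.symm
    convert h3 using 1
    rfl
  have hPMid2 : MeasurePreserving (Prod.map (id : ℝ → ℝ) Prod.swap) ρ ρ :=
    (MeasurePreserving.id ν).prod Measure.measurePreserving_swap
  have hPM13 : MeasurePreserving (fun p : ℝ × ℝ × ℝ => (p.2.2, (p.2.1, p.1))) ρ ρ := by
    have h3 := (hPM12.comp hPMid2).comp hPM12
    convert h3 using 1
    rfl
  set T : Set (ℝ × ℝ × ℝ) := {p | p.1 ≤ p.2.1 ∧ p.1 ≤ p.2.2} with hT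
  have hTm : MeasurableSet T :=
    (measurableSet_le measurable_fst (measurable_fst.comp measurable_snd)).inter
      (measurableSet_le measurable_fst (measurable_snd.comp measurable_snd))
  set T2 := (fun p : ℝ × ℝ × ℝ => (p.2.1, (p.1, p.2.2))) ⁻¹' T with hT2
  set T3 := (fun p : ℝ × ℝ × ℝ => (p.2.2, (p.2.1, p.1))) ⁻¹' T with hT3
  have hT2m : MeasurableSet T2 := hTm.preimage (by fun_prop)
  have hT3m : MeasurableSet T3 := hTm.preimage (by fun_prop)
  have e2 : ρ T2 = ρ T := hPM12.measure_preimage hTm.nullMeasurableSet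
  have e3 : ρ T3 = ρ T := hPM13.measure_preimage hTm.nullMeasurableSet
  have hunion : T ∪ T2 ∪ T3 = Set.univ := by
    ext ⟨a, b, c⟩
    simp only [Set.mem_union, Set.mem_univ, iff_true, hT2, hT3, Set.mem_preimage, hT,
      Set.mem_setOf_eq]
    rcases le_total a b with hab | hab
    · rcases le_total a c with hac | hac
      · exact Or.inl (Or.inl ⟨hab, hac⟩)
      · exact Or.inr ⟨hac.trans hab, hac⟩
    · rcases le_total b c with hbc | hbc
      · exact Or.inl (Or.inr ⟨hab, hbc⟩)
      · exact Or.inr ⟨hbc, hbc.trans hab⟩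
  have hi12 : ρ (T ∩ T2) = 0 := by
    refine measure_mono_null ?_ (AC.eq12_null ν hatom)
    rintro ⟨a, b, c⟩ ⟨⟨h1, _⟩, ⟨h2, _⟩⟩
    exact le_antisymm h1 h2
  have hi13 : ρ ((T ∪ T2) ∩ T3) = 0 := by
    refine measure_mono_null ?_
      (measure_union_null (AC.eq13_null ν hatom) (AC.eq23_null ν hatom))
    rintro ⟨a, b, c⟩ ⟨h1 | h1, ⟨h2, h3⟩⟩
    · exact Or.inl (le_antisymm h1.2 h3)
    · exact Or.inr (le_antisymm h1.2 h2)
  have k1 := measure_union_add_inter (μ := ρ) T hT2m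
  rw [hi12, add_zero] at k1
  have k2 := measure_union_add_inter (μ := ρ) (T ∪ T2) hT3m
  rw [hi13, add_zero, hunion, measure_univ, k1, e2, e3] at k2
  have h3 : (3 : ℝ≥0∞) * ρ T = 1 := by
    rw [show (3 : ℝ≥0∞) = 1 + 1 + 1 by norm_num, add_mul, add_mul, one_mul]
    exact k2.symm
  rw [ENNReal.eq_div_iff (by norm_num) (by norm_num)]
  exact h3
end

lemma AC.atomless {Ω : Type*} [MeasurableSpace Ω] (μ : Measure Ω) [IsProbabilityMeasure μ]
    (d : ℕ) (X0 : Ω → EuclideanSpace ℝ (Fin d)) (Y0 : Ω → ℝ)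
    (hX0 : Measurable X0) (hY0 : Measurable Y0)
    (hF : Continuous fun p : EuclideanSpace ℝ (Fin d) × ℝ =>
      (μ {ω | (∀ k, X0 ω k ≤ p.1 k) ∧ Y0 ω ≤ p.2}).toReal) (t : ℝ) :
    μ {ω | Y0 ω = t} = 0 := by
  by_contra hc
  have hXk : ∀ k, Measurable fun ω => X0 ω k := fun k => (measurable_pi_apply k).comp ((WithLp.measurable_ofLp 2 _).comp hX0)
  set S : ℕ → Set Ω := fun m => {ω | (∀ k, X0 ω k ≤ (m : ℝ)) ∧ Y0 ω = t} with hS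
  have hSU : ⋃ m, S m = {ω | Y0 ω = t} := by
    ext ω
    simp only [Set.mem_iUnion, hS, Set.mem_setOf_eq]
    constructor
    · rintro ⟨m, _, h2⟩; exact h2
    · intro h
      obtain ⟨M, hM⟩ := Finite.exists_le fun k => X0 ω k
      obtain ⟨m, hm⟩ := exists_nat_ge M
      exact ⟨m, fun k => (hM k).trans hm, h⟩
  obtain ⟨m, hm⟩ : ∃ m, μ (S m) ≠ 0 := by
    by_contra hz
    push_neg at hz
    exact hc (hSU ▸ measure_iUnion_null hz)
  set x : EuclideanSpace ℝ (Fin d) := WithLp.toLp 2 (fun _ => (m : ℝ)) with hx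
  set g : ℝ → ℝ := fun s => (μ {ω | (∀ k, X0 ω k ≤ (m : ℝ)) ∧ Y0 ω ≤ s}).toReal with hg
  have hgc : Continuous g := hF.comp (Continuous.prodMk_right x)
  set c : ℝ := (μ (S m)).toReal with hcdef
  have hcpos : 0 < c := ENNReal.toReal_pos hm (measure_ne_top μ _)
  have hXle : MeasurableSet {ω | ∀ k, X0 ω k ≤ (m : ℝ)} := by
    have : {ω | ∀ k, X0 ω k ≤ (m : ℝ)} = ⋂ k, {ω | X0 ω k ≤ (m : ℝ)} := by ext; simp
    rw [this]
    exact MeasurableSet.iInter fun k => measurableSet_le (hXk k) measurable_const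
  have hSmeas : MeasurableSet (S m) := by
    have : S m = {ω | ∀ k, X0 ω k ≤ (m : ℝ)} ∩ {ω | Y0 ω = t} := by
      ext ω; simp [hS, Set.mem_inter_iff]
    rw [this]
    exact hXle.inter (hY0 (measurableSet_singleton t))
  have key : ∀ s : ℝ, s < t → g s + c ≤ g t := by
    intro s hs
    set A : Set Ω := {ω | (∀ k, X0 ω k ≤ (m : ℝ)) ∧ Y0 ω ≤ s} with hA
    have hAmeas : MeasurableSet A := by
      have : A = {ω | ∀ k, X0 ω k ≤ (m : ℝ)} ∩ {ω | Y0 ω ≤ s} := by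
        ext ω; simp [hA, Set.mem_inter_iff]
      rw [this]
      exact hXle.inter (hY0 measurableSet_Iic)
    have hdisj : Disjoint A (S m) := by
      rw [Set.disjoint_left]
      rintro ω ⟨_, h1⟩ ⟨_, h2⟩
      rw [h2] at h1; exact absurd h1 (not_le.mpr hs)
    have hsub : A ∪ S m ⊆ {ω | (∀ k, X0 ω k ≤ (m : ℝ)) ∧ Y0 ω ≤ t} := by
      rintro ω (⟨h1, h2⟩ | ⟨h1, h2⟩)
      · exact ⟨h1, h2.trans hs.le⟩
      · exact ⟨h1, h2.le⟩
    have hmu : μ A + μ (S m) ≤ μ {ω | (∀ k, X0 ω k ≤ (m : ℝ)) ∧ Y0 ω ≤ t} := by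
      rw [← measure_union hdisj hSmeas]
      exact measure_mono hsub
    have := ENNReal.toReal_mono (measure_ne_top μ _) hmu
    rwa [ENNReal.toReal_add (measure_ne_top μ _) (measure_ne_top μ _)] at this
  -- take the limit s → t from below
  have hseq : Tendsto (fun k : ℕ => t - 1 / (k + 1)) atTop (𝓝 t) := by
    have := tendsto_one_div_add_atTop_nhds_zero_nat (𝕜 := ℝ)
    have h2 := (tendsto_const_nhds (x := t) (f := atTop (α := ℕ))).sub this
    simpa using h2
  have hglim : Tendsto (fun k : ℕ => g (t - 1 / (k + 1))) atTop (𝓝 (g t)) :=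
    (hgc.continuousAt.tendsto).comp hseq
  have hle : ∀ k : ℕ, g (t - 1 / (k + 1)) ≤ g t - c := by
    intro k
    have h1 : t - 1 / ((k : ℝ) + 1) < t := by
      have : (0 : ℝ) < 1 / ((k : ℝ) + 1) := by positivity
      linarith
    linarith [key _ h1]
  have := le_of_tendsto hglim (Filter.Eventually.of_forall hle)
  linarith

lemma AC.ite_eq_indicator {Ω : Type*} (p : Ω → Prop) [DecidablePred p] :
    (fun ω => if p ω then (1:ℝ) else 0) = Set.indicator {ω | p ω} (fun _ => (1:ℝ)) := by
  funext ω
  rw [Set.indicator_apply]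
  simp only [Set.mem_setOf_eq]

lemma AC.integral_ite {Ω : Type*} [MeasurableSpace Ω] (μ : Measure Ω) [IsFiniteMeasure μ]
    (p : Ω → Prop) [DecidablePred p] (hp : MeasurableSet {ω | p ω}) :
    ∫ ω, (if p ω then (1:ℝ) else 0) ∂μ = (μ {ω | p ω}).toReal := by
  rw [AC.ite_eq_indicator p]
  rw [integral_indicator_const (1:ℝ) hp, smul_eq_mul, mul_one]
  rfl

lemma AC.integrable_ite {Ω : Type*} [MeasurableSpace Ω] (μ : Measure Ω) [IsFiniteMeasure μ]
    (p : Ω → Prop) [DecidablePred p] (hp : MeasurableSet {ω | p ω}) :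
    Integrable (fun ω => if p ω then (1:ℝ) else 0) μ := by
  rw [AC.ite_eq_indicator p]
  exact (integrable_const (1:ℝ)).indicator hp


/-- If `X ⊥ Y` and the joint CDF of `(X,Y)` is continuous, then
`E[ξₙ] = -1/(n-1)` for Azadkia–Chatterjee's coefficient
`ξₙ = 6/(n²-1) ∑ᵢ min(Rᵢ, R_{N(i)}) - (2n+1)/(n-1)`, where `Rᵢ` is the rank of `Yᵢ`
and `N(i)` is the nearest-neighbor index of `Xᵢ`, a measurable function of the
`X`-sample breaking ties. -/
theorem expectation_xi_n_null
    {Ω : Type*} [MeasurableSpace Ω] (μ : Measure Ω) [IsProbabilityMeasure μ]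
    (d n : ℕ) (hn : 2 ≤ n)
    (X : Fin n → Ω → EuclideanSpace ℝ (Fin d))
    (Y : Fin n → Ω → ℝ)
    (hX : ∀ i, Measurable (X i)) (hY : ∀ i, Measurable (Y i))
    -- the pairs (Xᵢ, Yᵢ) are i.i.d.
    (hiid : iIndepFun (fun i ω => (X i ω, Y i ω)) μ)
    (hident : ∀ i j, μ.map (fun ω => (X i ω, Y i ω)) = μ.map (fun ω => (X j ω, Y j ω)))
    -- X is independent of Y
    (hXY : IndepFun (fun ω i => X i ω) (fun ω i => Y i ω) μ)
    -- the joint CDF of (X, Y) is continuous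
    (hFcont : Continuous fun p : EuclideanSpace ℝ (Fin d) × ℝ =>
      (μ {ω | (∀ k, X ⟨0, by omega⟩ ω k ≤ p.1 k) ∧ Y ⟨0, by omega⟩ ω ≤ p.2}).toReal)
    -- nearest-neighbor index, a measurable function of the X-sample
    (φ : (Fin n → EuclideanSpace ℝ (Fin d)) → Fin n → Fin n) (hφ : Measurable φ)
    (N : Ω → Fin n → Fin n) (hN : ∀ ω, N ω = φ (fun i => X i ω))
    (hNspec : ∀ ω i, N ω i ≠ i ∧
      ∀ j, j ≠ i → dist (X (N ω i) ω) (X i ω) ≤ dist (X j ω) (X i ω))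
    -- ranks
    (R : Fin n → Ω → ℝ)
    (hR : ∀ i ω, R i ω = ∑ j, if Y j ω ≤ Y i ω then (1 : ℝ) else 0)
    -- the Azadkia–Chatterjee coefficient
    (ξ : Ω → ℝ)
    (hξ : ∀ ω, ξ ω = 6 / ((n : ℝ) ^ 2 - 1) * ∑ i, min (R i ω) (R (N ω i) ω)
      - (2 * (n : ℝ) + 1) / ((n : ℝ) - 1)) :
    ∫ ω, ξ ω ∂μ = -1 / ((n : ℝ) - 1) := by
  classical
  let i0 : Fin n := ⟨0, by omega⟩
  -- the law of a single Y
  set ν : Measure ℝ := μ.map (Y i0) with hν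
  have hνprob : IsProbabilityMeasure ν := Measure.isProbabilityMeasure_map (hY i0).aemeasurable
  have hpair_meas : ∀ i, Measurable fun ω => (X i ω, Y i ω) := fun i => (hX i).prodMk (hY i)
  have hatomμ : ∀ t, μ {ω | Y i0 ω = t} = 0 := fun t =>
    AC.atomless μ d (X i0) (Y i0) (hX i0) (hY i0) hFcont t
  have hatomν : ∀ t : ℝ, ν {t} = 0 := by
    intro t
    rw [hν, Measure.map_apply (hY i0) (measurableSet_singleton t)]
    exact hatomμ t
  have hYiid : iIndepFun Y μ := by
    have := hiid.comp (fun _ => Prod.snd) (fun _ => measurable_snd)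
    exact this
  have hYident : ∀ i, μ.map (Y i) = ν := by
    intro i
    have h1 : μ.map (Y i) = (μ.map (fun ω => (X i ω, Y i ω))).map Prod.snd :=
      (Measure.map_map measurable_snd (hpair_meas i)).symm
    have h2 : ν = (μ.map (fun ω => (X i0 ω, Y i0 ω))).map Prod.snd :=
      (Measure.map_map measurable_snd (hpair_meas i0)).symm
    rw [h1, h2, hident i i0]
  have hpairlaw : ∀ i j, i ≠ j → μ.map (fun ω => (Y i ω, Y j ω)) = ν.prod ν := by
    intro i j hij
    have hind : IndepFun (Y i) (Y j) μ := hYiid.indepFun hij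
    have := (indepFun_iff_map_prod_eq_prod_map_map (hY i).aemeasurable
      (hY j).aemeasurable).mp hind
    rw [this, hYident i, hYident j]
  have htriplelaw : ∀ k i j, k ≠ i → k ≠ j → i ≠ j →
      μ.map (fun ω => (Y k ω, (Y i ω, Y j ω))) = ν.prod (ν.prod ν) := by
    intro k i j hki hkj hij
    have hind : IndepFun (Y k) (fun ω => (Y i ω, Y j ω)) μ :=
      (hYiid.indepFun_prodMk hY i j k hki.symm hkj.symm).symm
    have := (indepFun_iff_map_prod_eq_prod_map_map (hY k).aemeasurable
      ((hY i).prodMk (hY j)).aemeasurable).mp hind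
    rw [this, hYident k, hpairlaw i j hij]
  -- probability computations
  have P2 : ∀ i j, i ≠ j → μ {ω | Y i ω ≤ Y j ω} = 1/2 := by
    intro i j hij
    have hmeas : MeasurableSet {p : ℝ × ℝ | p.1 ≤ p.2} :=
      measurableSet_le measurable_fst measurable_snd
    calc μ {ω | Y i ω ≤ Y j ω}
        = (μ.map (fun ω => (Y i ω, Y j ω))) {p : ℝ × ℝ | p.1 ≤ p.2} := by
          rw [Measure.map_apply ((hY i).prodMk (hY j)) hmeas]; rfl
      _ = 1/2 := by rw [hpairlaw i j hij]; exact AC.half ν hatomν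
  have P3 : ∀ k i j, k ≠ i → k ≠ j → i ≠ j →
      μ {ω | Y k ω ≤ Y i ω ∧ Y k ω ≤ Y j ω} = 1/3 := by
    intro k i j hki hkj hij
    have hmeas : MeasurableSet {p : ℝ × ℝ × ℝ | p.1 ≤ p.2.1 ∧ p.1 ≤ p.2.2} :=
      (measurableSet_le measurable_fst (measurable_fst.comp measurable_snd)).inter
        (measurableSet_le measurable_fst (measurable_snd.comp measurable_snd))
    calc μ {ω | Y k ω ≤ Y i ω ∧ Y k ω ≤ Y j ω}
        = (μ.map (fun ω => (Y k ω, (Y i ω, Y j ω))))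
            {p : ℝ × ℝ × ℝ | p.1 ≤ p.2.1 ∧ p.1 ≤ p.2.2} := by
          rw [Measure.map_apply ((hY k).prodMk ((hY i).prodMk (hY j))) hmeas]; rfl
      _ = 1/3 := by rw [htriplelaw k i j hki hkj hij]; exact AC.third ν hatomν
  -- measurable sets
  have hYevent : ∀ k i j, MeasurableSet {ω | Y k ω ≤ Y i ω ∧ Y k ω ≤ Y j ω} := by
    intro k i j
    exact (measurableSet_le (hY k) (hY i)).inter (measurableSet_le (hY k) (hY j))
  have hNmeas : ∀ i, Measurable fun ω => N ω i := by
    intro i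
    have : (fun ω => N ω i) = fun ω => φ (fun k => X k ω) i := by
      funext ω; rw [hN ω]
    rw [this]
    exact (measurable_pi_apply i).comp (hφ.comp (measurable_pi_lambda _ fun k => hX k))
  have hNevent : ∀ i j, MeasurableSet {ω | N ω i = j} := fun i j =>
    (hNmeas i) (measurableSet_singleton j)
  -- pointwise identity for min of ranks
  have hmin_sum : ∀ i j ω, min (R i ω) (R j ω)
      = ∑ k, if (Y k ω ≤ Y i ω ∧ Y k ω ≤ Y j ω) then (1:ℝ) else 0 := by
    intro i j ω
    rcases le_total (Y i ω) (Y j ω) with h | h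
    · rw [min_eq_left, hR i ω]
      · refine Finset.sum_congr rfl fun k _ => ?_
        by_cases hk : Y k ω ≤ Y i ω
        · simp [hk, hk.trans h]
        · simp [hk]
      · rw [hR i ω, hR j ω]
        refine Finset.sum_le_sum fun k _ => ?_
        by_cases hk : Y k ω ≤ Y i ω
        · simp [hk, hk.trans h]
        · simp only [hk, if_false]
          split <;> norm_num
    · rw [min_eq_right, hR j ω]
      · refine Finset.sum_congr rfl fun k _ => ?_
        by_cases hk : Y k ω ≤ Y j ω
        · simp [hk, hk.trans h]
        · simp [hk]
      · rw [hR i ω, hR j ω]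
        refine Finset.sum_le_sum fun k _ => ?_
        by_cases hk : Y k ω ≤ Y j ω
        · simp [hk, hk.trans h]
        · simp only [hk, if_false]
          split <;> norm_num
  -- expectation of min of two fixed ranks
  have E2 : ∀ i j, i ≠ j → ∫ ω, min (R i ω) (R j ω) ∂μ = ((n:ℝ) + 1)/3 := by
    intro i j hij
    have hrw : (fun ω => min (R i ω) (R j ω))
        = fun ω => ∑ k, if (Y k ω ≤ Y i ω ∧ Y k ω ≤ Y j ω) then (1:ℝ) else 0 :=
      funext (hmin_sum i j)
    rw [hrw, integral_finset_sum _ fun k _ => AC.integrable_ite μ _ (hYevent k i j)]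
    have hval : ∀ k, ∫ ω, (if (Y k ω ≤ Y i ω ∧ Y k ω ≤ Y j ω) then (1:ℝ) else 0) ∂μ
        = if k = i ∨ k = j then (1/2 : ℝ) else 1/3 := by
      intro k
      rw [AC.integral_ite μ _ (hYevent k i j)]
      by_cases hki : k = i
      · subst hki
        have hset : {ω | Y k ω ≤ Y k ω ∧ Y k ω ≤ Y j ω} = {ω | Y k ω ≤ Y j ω} := by
          ext ω; simp
        rw [hset, P2 k j hij]
        norm_num [ENNReal.toReal_div]
      · by_cases hkj : k = j
        · subst hkj
          have hset : {ω | Y k ω ≤ Y i ω ∧ Y k ω ≤ Y k ω} = {ω | Y k ω ≤ Y i ω} := by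
            ext ω; simp
          rw [hset, P2 k i hki]
          norm_num [ENNReal.toReal_div]
        · rw [P3 k i j hki hkj hij]
          simp only [hki, hkj, or_self, if_false]
          norm_num [ENNReal.toReal_div]
    rw [Finset.sum_congr rfl fun k _ => hval k]
    have hsplit := Finset.sum_sdiff (f := fun k => if k = i ∨ k = j then (1/2 : ℝ) else 1/3)
      (Finset.subset_univ ({i, j} : Finset (Fin n)))
    have hpair : ∑ k ∈ ({i, j} : Finset (Fin n)),
        (if k = i ∨ k = j then (1/2 : ℝ) else 1/3) = 1 := by
      rw [Finset.sum_pair hij]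
      norm_num
    have hrest : ∑ k ∈ Finset.univ \ ({i, j} : Finset (Fin n)),
        (if k = i ∨ k = j then (1/2 : ℝ) else 1/3) = ((n:ℝ) - 2) / 3 := by
      have hcongr : ∀ k ∈ Finset.univ \ ({i, j} : Finset (Fin n)),
          (if k = i ∨ k = j then (1/2 : ℝ) else 1/3) = 1/3 := by
        intro k hk
        rw [Finset.mem_sdiff, Finset.mem_insert, Finset.mem_singleton] at hk
        have := hk.2
        push_neg at this
        simp [this.1, this.2]
      rw [Finset.sum_congr rfl hcongr, Finset.sum_const, nsmul_eq_mul]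
      rw [Finset.card_sdiff_of_subset (Finset.subset_univ _), Finset.card_univ, Fintype.card_fin,
        Finset.card_pair hij]
      rw [Nat.cast_sub hn]
      push_cast
      ring
    rw [← hsplit, hpair, hrest]
    have h2 : (2:ℝ) ≤ (n:ℝ) := by exact_mod_cast hn
    field_simp
    ring
  -- decomposition over nearest-neighbor values
  have hpt : ∀ i ω, min (R i ω) (R (N ω i) ω)
      = ∑ j, (if N ω i = j then (1:ℝ) else 0) * min (R i ω) (R j ω) := by
    intro i ω
    have h1 : ∀ j : Fin n, (if N ω i = j then (1:ℝ) else 0) * min (R i ω) (R j ω)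
        = if N ω i = j then min (R i ω) (R j ω) else 0 := by
      intro j; split <;> simp
    rw [Finset.sum_congr rfl fun j _ => h1 j, Finset.sum_ite_eq]
    simp
  have hint : ∀ i j, Integrable
      (fun ω => (if N ω i = j then (1:ℝ) else 0) * min (R i ω) (R j ω)) μ := by
    intro i j
    have heq : (fun ω => (if N ω i = j then (1:ℝ) else 0) * min (R i ω) (R j ω))
        = fun ω => ∑ k, if (N ω i = j ∧ Y k ω ≤ Y i ω ∧ Y k ω ≤ Y j ω) then (1:ℝ) else 0 := by
      funext ω
      rw [hmin_sum i j ω, Finset.mul_sum]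
      refine Finset.sum_congr rfl fun k _ => ?_
      by_cases h1 : N ω i = j <;>
        by_cases h2 : (Y k ω ≤ Y i ω ∧ Y k ω ≤ Y j ω) <;> simp [h1, h2]
    rw [heq]
    refine integrable_finset_sum _ fun k _ => AC.integrable_ite μ _ ?_
    exact (hNevent i j).inter (hYevent k i j)
  have hRmeas : ∀ i, Measurable (R i) := by
    intro i
    have : R i = fun ω => ∑ j, if Y j ω ≤ Y i ω then (1:ℝ) else 0 := funext (hR i)
    rw [this]
    exact Finset.measurable_sum _ fun j _ =>
      Measurable.ite (measurableSet_le (hY j) (hY i)) measurable_const measurable_const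
  have hsplitint : ∀ i j, ∫ ω, (if N ω i = j then (1:ℝ) else 0) * min (R i ω) (R j ω) ∂μ
      = (μ {ω | N ω i = j}).toReal * ∫ ω, min (R i ω) (R j ω) ∂μ := by
    intro i j
    have hA : (fun ω => if N ω i = j then (1:ℝ) else 0)
        = (fun xs : Fin n → EuclideanSpace ℝ (Fin d) => if φ xs i = j then (1:ℝ) else 0)
          ∘ (fun ω k => X k ω) := by
      funext ω
      simp only [Function.comp_apply]
      rw [hN ω]
    have hM : (fun ω => min (R i ω) (R j ω))
        = (fun ys : Fin n → ℝ => min (∑ k, if ys k ≤ ys i then (1:ℝ) else 0)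
            (∑ k, if ys k ≤ ys j then (1:ℝ) else 0)) ∘ (fun ω k => Y k ω) := by
      funext ω
      simp only [Function.comp_apply]
      rw [hR i ω, hR j ω]
    have hgmeas1 : Measurable
        (fun xs : Fin n → EuclideanSpace ℝ (Fin d) => if φ xs i = j then (1:ℝ) else 0) := by
      refine Measurable.ite ?_ measurable_const measurable_const
      exact (measurable_pi_apply i).comp hφ (measurableSet_singleton j)
    have hgmeas2 : Measurable (fun ys : Fin n → ℝ => min (∑ k, if ys k ≤ ys i then (1:ℝ) else 0)
        (∑ k, if ys k ≤ ys j then (1:ℝ) else 0)) := by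
      refine Measurable.min ?_ ?_ <;>
        refine Finset.measurable_sum _ fun k _ => Measurable.ite
          (measurableSet_le (measurable_pi_apply k) (measurable_pi_apply _))
          measurable_const measurable_const
    have hindep : IndepFun (fun ω => if N ω i = j then (1:ℝ) else 0)
        (fun ω => min (R i ω) (R j ω)) μ := by
      rw [hA, hM]
      exact hXY.comp hgmeas1 hgmeas2
    have hAmeas : Measurable (fun ω => if N ω i = j then (1:ℝ) else 0) :=
      Measurable.ite (hNevent i j) measurable_const measurable_const
    have hMmeas : Measurable (fun ω => min (R i ω) (R j ω)) :=
      (hRmeas i).min (hRmeas j)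
    calc ∫ ω, (if N ω i = j then (1:ℝ) else 0) * min (R i ω) (R j ω) ∂μ
        = (∫ ω, (if N ω i = j then (1:ℝ) else 0) ∂μ) * ∫ ω, min (R i ω) (R j ω) ∂μ :=
          hindep.integral_mul_eq_mul_integral hAmeas.aestronglyMeasurable hMmeas.aestronglyMeasurable
      _ = (μ {ω | N ω i = j}).toReal * ∫ ω, min (R i ω) (R j ω) ∂μ := by
          rw [AC.integral_ite μ _ (hNevent i j)]
  have hsum1 : ∀ i, ∑ j, (μ {ω | N ω i = j}).toReal = 1 := by
    intro i
    have hone : ∀ ω, ∑ j : Fin n, (if N ω i = j then (1:ℝ) else 0) = 1 := by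
      intro ω
      rw [Finset.sum_ite_eq]
      simp
    calc ∑ j, (μ {ω | N ω i = j}).toReal
        = ∑ j, ∫ ω, (if N ω i = j then (1:ℝ) else 0) ∂μ :=
          Finset.sum_congr rfl fun j _ => (AC.integral_ite μ _ (hNevent i j)).symm
      _ = ∫ ω, (∑ j : Fin n, if N ω i = j then (1:ℝ) else 0) ∂μ :=
          (integral_finset_sum _ fun j _ => AC.integrable_ite μ _ (hNevent i j)).symm
      _ = ∫ ω, (1:ℝ) ∂μ := integral_congr_ae (Eventually.of_forall hone)
      _ = 1 := by simp
  have hkey : ∀ i, ∫ ω, min (R i ω) (R (N ω i) ω) ∂μ = ((n:ℝ) + 1)/3 := by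
    intro i
    calc ∫ ω, min (R i ω) (R (N ω i) ω) ∂μ
        = ∫ ω, ∑ j, (if N ω i = j then (1:ℝ) else 0) * min (R i ω) (R j ω) ∂μ :=
          integral_congr_ae (Eventually.of_forall (hpt i))
      _ = ∑ j, ∫ ω, (if N ω i = j then (1:ℝ) else 0) * min (R i ω) (R j ω) ∂μ :=
          integral_finset_sum _ fun j _ => hint i j
      _ = ∑ j, (μ {ω | N ω i = j}).toReal * (((n:ℝ) + 1)/3) := by
          refine Finset.sum_congr rfl fun j _ => ?_
          rw [hsplitint i j]
          by_cases hj : j = i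
          · subst hj
            have : {ω | N ω j = j} = (∅ : Set Ω) := by
              ext ω
              simp only [Set.mem_setOf_eq, Set.mem_empty_iff_false, iff_false]
              exact (hNspec ω j).1
            rw [this]
            simp
          · rw [E2 i j (fun h => hj h.symm)]
      _ = (∑ j, (μ {ω | N ω i = j}).toReal) * (((n:ℝ) + 1)/3) := by
          rw [Finset.sum_mul]
      _ = ((n:ℝ) + 1)/3 := by rw [hsum1 i, one_mul]
  have hminint : ∀ i, Integrable (fun ω => min (R i ω) (R (N ω i) ω)) μ := by
    intro i
    exact (integrable_finset_sum _ fun j _ => hint i j).congr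
      (Eventually.of_forall fun ω => (hpt i ω).symm)
  have hsumint : Integrable (fun ω => ∑ i, min (R i ω) (R (N ω i) ω)) μ :=
    integrable_finset_sum _ fun i _ => hminint i
  have hSint : ∫ ω, (∑ i, min (R i ω) (R (N ω i) ω)) ∂μ = (n:ℝ) * (((n:ℝ) + 1)/3) := by
    rw [integral_finset_sum _ fun i _ => hminint i,
      Finset.sum_congr rfl fun i _ => hkey i, Finset.sum_const, Finset.card_univ,
      Fintype.card_fin, nsmul_eq_mul]
  have hxi : ∫ ω, ξ ω ∂μ
      = 6 / ((n : ℝ) ^ 2 - 1) * ((n:ℝ) * (((n:ℝ) + 1)/3)) - (2 * (n : ℝ) + 1) / ((n : ℝ) - 1) := by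
    calc ∫ ω, ξ ω ∂μ
        = ∫ ω, (6 / ((n : ℝ) ^ 2 - 1) * ∑ i, min (R i ω) (R (N ω i) ω)
            - (2 * (n : ℝ) + 1) / ((n : ℝ) - 1)) ∂μ :=
          integral_congr_ae (Eventually.of_forall hξ)
      _ = ∫ ω, (6 / ((n : ℝ) ^ 2 - 1) * ∑ i, min (R i ω) (R (N ω i) ω)) ∂μ
            - ∫ _ω, ((2 * (n : ℝ) + 1) / ((n : ℝ) - 1)) ∂μ :=
          integral_sub (hsumint.const_mul _) (integrable_const _)
      _ = 6 / ((n : ℝ) ^ 2 - 1) * ((n:ℝ) * (((n:ℝ) + 1)/3))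
            - (2 * (n : ℝ) + 1) / ((n : ℝ) - 1) := by
          rw [integral_const_mul, hSint]
          simp [measure_univ]
  rw [hxi]
  have h2 : (2:ℝ) ≤ (n:ℝ) := by exact_mod_cast hn
  have hne1 : (n:ℝ) - 1 ≠ 0 := by intro h; linarith [h]
  have hne2 : (n:ℝ) + 1 ≠ 0 := by intro h; linarith [h]
  have hsq : (n:ℝ)^2 - 1 ≠ 0 := by
    have : (n:ℝ)^2 - 1 = ((n:ℝ) - 1) * ((n:ℝ) + 1) := by ring
    rw [this]
    exact mul_ne_zero hne1 hne2
  field_simp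
  ring
end
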